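/- Suppose homogeneous polynomials of degree 5 satisfy ℓ_μ^5 + 10 q ℓ_μ^3 + 15 q^2 ℓ_μ = ℓ_μ^5 + 10 q' ℓ_μ^3 + 30 (q')^2 ℓ_μ in ℂ[t₁,...,tₙ], where ℓ_μ is a nonzero linear form and q, q' are quadratic forms. Then both q and q' are scalar multiples of ℓ_μ². -/

import Mathlib

open MvPolynomial

namespace QuadAux

lemma degree_add' {σ : Type*} (u v : σ →₀ ℕ) :
    (u + v).degree = u.degree + v.degree := by
  simp [Finsupp.degree_eq_weight_one, map_add]

lemma degree_eq_of_isHomogeneous {σ R : Type*} [CommSemiring R]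
    {φ : MvPolynomial σ R} {m : ℕ} (hφ : φ.IsHomogeneous m)
    {d : σ →₀ ℕ} (hd : coeff d φ ≠ 0) : d.degree = m := by
  rw [Finsupp.degree_eq_weight_one]
  exact hφ hd

lemma coeff_mul_component {σ R : Type*} [CommSemiring R]
    (p q : MvPolynomial σ R) (a b : ℕ) {d : σ →₀ ℕ}
    (h : ∀ u v : σ →₀ ℕ, u + v = d → u.degree ≠ a → coeff u p = 0 ∨ coeff v q = 0)
    (hd : d.degree = a + b) :
    coeff d (p * q) =
      coeff d (homogeneousComponent a p * homogeneousComponent b q) := by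
  classical
  rw [coeff_mul, coeff_mul]
  refine Finset.sum_congr rfl ?_
  rintro ⟨u, v⟩ huv
  rw [Finset.HasAntidiagonal.mem_antidiagonal] at huv
  rw [coeff_homogeneousComponent, coeff_homogeneousComponent]
  by_cases hu : u.degree = a
  · have hadd : u.degree + v.degree = a + b := by rw [← degree_add', huv, hd]
    have hv : v.degree = b := by omega
    rw [if_pos hu, if_pos hv]
  · rcases h u v huv hu with h0 | h0 <;> rw [if_neg hu] <;> simp [h0]

end QuadAux

namespace QuadAux

/-- In a domain, factors of a nonzero homogeneous polynomial are homogeneous. -/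
lemma factors_homogeneous {σ R : Type*} [CommRing R] [IsDomain R]
    {p q : MvPolynomial σ R} {n : ℕ}
    (h : (p * q).IsHomogeneous n) (hne : p * q ≠ 0) :
    ∃ a b : ℕ, a + b = n ∧ p.IsHomogeneous a ∧ q.IsHomogeneous b := by
  classical
  have hp0 : p ≠ 0 := left_ne_zero_of_mul hne
  have hq0 : q ≠ 0 := right_ne_zero_of_mul hne
  have hps : p.support.Nonempty := Finset.nonempty_iff_ne_empty.mpr (mt MvPolynomial.support_eq_empty.mp hp0)
  have hqs : q.support.Nonempty := Finset.nonempty_iff_ne_empty.mpr (mt MvPolynomial.support_eq_empty.mp hq0)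
  set A := p.totalDegree with hA
  set B := q.totalDegree with hB
  set a := p.support.inf' hps Finsupp.degree with ha
  set b := q.support.inf' hqs Finsupp.degree with hb
  -- bounds on support degrees
  have hpa : ∀ u : Fin 0 →₀ ℕ, True := fun _ => trivial
  have hlowp : ∀ u, coeff u p ≠ 0 → a ≤ u.degree := fun u hu =>
    Finset.inf'_le _ (mem_support_iff.mpr hu)
  have hlowq : ∀ v, coeff v q ≠ 0 → b ≤ v.degree := fun v hv =>
    Finset.inf'_le _ (mem_support_iff.mpr hv)
  have hhighp : ∀ u : σ →₀ ℕ, A < u.degree → coeff u p = 0 := by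
    intro u hu
    exact coeff_eq_zero_of_totalDegree_lt hu
  have hhighq : ∀ v : σ →₀ ℕ, B < v.degree → coeff v q = 0 := by
    intro v hv
    exact coeff_eq_zero_of_totalDegree_lt hv
  -- the top homogeneous components are nonzero
  have htopp : homogeneousComponent A p ≠ 0 := by
    obtain ⟨dA, hdA, hAeq⟩ := Finset.exists_mem_eq_sup p.support hps
      (fun s => s.sum fun _ e => e)
    rw [ne_zero_iff]
    refine ⟨dA, ?_⟩
    rw [coeff_homogeneousComponent, if_pos (by exact hAeq.symm)]
    exact mem_support_iff.mp hdA
  have htopq : homogeneousComponent B q ≠ 0 := by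
    obtain ⟨dB, hdB, hBeq⟩ := Finset.exists_mem_eq_sup q.support hqs
      (fun s => s.sum fun _ e => e)
    rw [ne_zero_iff]
    refine ⟨dB, ?_⟩
    rw [coeff_homogeneousComponent, if_pos (by exact hBeq.symm)]
    exact mem_support_iff.mp hdB
  -- bottom components nonzero
  have hbotp : homogeneousComponent a p ≠ 0 := by
    obtain ⟨dA, hdA, hAeq⟩ := Finset.exists_mem_eq_inf' hps Finsupp.degree
    rw [ne_zero_iff]
    refine ⟨dA, ?_⟩
    rw [coeff_homogeneousComponent, if_pos hAeq.symm]
    exact mem_support_iff.mp hdA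
  have hbotq : homogeneousComponent b q ≠ 0 := by
    obtain ⟨dB, hdB, hBeq⟩ := Finset.exists_mem_eq_inf' hqs Finsupp.degree
    rw [ne_zero_iff]
    refine ⟨dB, ?_⟩
    rw [coeff_homogeneousComponent, if_pos hBeq.symm]
    exact mem_support_iff.mp hdB
  -- A + B = n
  have hABn : A + B = n := by
    obtain ⟨d, hd⟩ := ne_zero_iff.mp
      (mul_ne_zero htopp htopq)
    have hddeg : d.degree = A + B :=
      degree_eq_of_isHomogeneous
        ((homogeneousComponent_isHomogeneous A p).mul
          (homogeneousComponent_isHomogeneous B q)) hd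
    have hcoeff : coeff d (p * q) ≠ 0 := by
      rw [coeff_mul_component p q A B ?_ hddeg]
      · exact hd
      · intro u v huv hu
        rcases lt_or_gt_of_ne hu with h' | h'
        · right
          apply hhighq
          have : u.degree + v.degree = A + B := by rw [← degree_add', huv, hddeg]
          omega
        · exact Or.inl (hhighp u h')
    have := degree_eq_of_isHomogeneous h hcoeff
    omega
  -- a + b = n
  have habn : a + b = n := by
    obtain ⟨d, hd⟩ := ne_zero_iff.mp (mul_ne_zero hbotp hbotq)
    have hddeg : d.degree = a + b :=
      degree_eq_of_isHomogeneous
        ((homogeneousComponent_isHomogeneous a p).mul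
          (homogeneousComponent_isHomogeneous b q)) hd
    have hcoeff : coeff d (p * q) ≠ 0 := by
      rw [coeff_mul_component p q a b ?_ hddeg]
      · exact hd
      · intro u v huv hu
        rcases lt_or_gt_of_ne hu with h' | h'
        · by_contra hc
          push_neg at hc
          exact absurd (hlowp u hc.1) (by omega)
        · by_contra hc
          push_neg at hc
          have : u.degree + v.degree = a + b := by rw [← degree_add', huv, hddeg]
          exact absurd (hlowq v hc.2) (by omega)
    have := degree_eq_of_isHomogeneous h hcoeff
    omega
  -- a ≤ A and b ≤ B
  have haA : a ≤ A := by
    obtain ⟨dA, hdA, hAeq⟩ := Finset.exists_mem_eq_sup p.support hps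
      (fun s => s.sum fun _ e => e)
    have := hlowp dA (mem_support_iff.mp hdA)
    have hdeq : dA.degree = A := hAeq.symm
    omega
  have hbB : b ≤ B := by
    obtain ⟨dB, hdB, hBeq⟩ := Finset.exists_mem_eq_sup q.support hqs
      (fun s => s.sum fun _ e => e)
    have := hlowq dB (mem_support_iff.mp hdB)
    have hdeq : dB.degree = B := hBeq.symm
    omega
  have haAe : a = A := by omega
  have hbBe : b = B := by omega
  refine ⟨a, b, habn, ?_, ?_⟩
  · intro d hd
    rw [show (Finsupp.weight (1 : σ → ℕ)) d = d.degree by rw [Finsupp.degree_eq_weight_one]; rfl]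
    have h1 := hlowp d hd
    have h2 : d.degree ≤ A := le_totalDegree (mem_support_iff.mpr hd)
    omega
  · intro d hd
    rw [show (Finsupp.weight (1 : σ → ℕ)) d = d.degree by rw [Finsupp.degree_eq_weight_one]; rfl]
    have h1 := hlowq d hd
    have h2 : d.degree ≤ B := le_totalDegree (mem_support_iff.mpr hd)
    omega

end QuadAux

namespace QuadAux

lemma homog_cofactor {σ R : Type*} [CommRing R] [IsDomain R]
    {φ ψ : MvPolynomial σ R} {m n : ℕ}
    (hφ : φ.IsHomogeneous m) (hne : φ * ψ ≠ 0) (hp : (φ * ψ).IsHomogeneous n) :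
    ∃ k, m + k = n ∧ ψ.IsHomogeneous k := by
  obtain ⟨a, b, hab, ha, hb⟩ := factors_homogeneous hp hne
  have ham : a = m := ha.inj_right hφ (left_ne_zero_of_mul hne)
  exact ⟨b, by omega, hb⟩

lemma eq_C_of_isHomogeneous_zero {σ R : Type*} [CommSemiring R]
    {φ : MvPolynomial σ R} (h : φ.IsHomogeneous 0) :
    φ = C (coeff 0 φ) := by
  have h1 := homogeneousComponent_of_mem ((mem_homogeneousSubmodule _ _).mpr h) (m := 0)
  rw [if_pos rfl] at h1
  conv_lhs => rw [← h1, homogeneousComponent_zero]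

lemma prime_of_linear {n : ℕ} {ℓ : MvPolynomial (Fin n) ℂ}
    (hℓ : ℓ.IsHomogeneous 1) (h0 : ℓ ≠ 0) : Prime ℓ := by
  rw [← UniqueFactorizationMonoid.irreducible_iff_prime]
  constructor
  · intro hu
    rcases hu.exists_right_inv with ⟨v, hv⟩
    have hne : ℓ * v ≠ 0 := by rw [hv]; exact one_ne_zero
    have h1 : (ℓ * v).IsHomogeneous 0 := by rw [hv]; exact isHomogeneous_one _ _
    obtain ⟨k, hk, -⟩ := homog_cofactor hℓ hne h1
    omega
  · intro x y hxy
    have hne : x * y ≠ 0 := by rw [← hxy]; exact h0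
    obtain ⟨i, j, hij, hx, hy⟩ := factors_homogeneous (n := 1) (by rw [← hxy]; exact hℓ) hne
    rcases Nat.eq_zero_or_pos i with hi | hi
    · left
      subst hi
      have := eq_C_of_isHomogeneous_zero hx
      rw [this]
      exact (isUnit_iff_ne_zero.mpr (by
        intro h
        apply left_ne_zero_of_mul hne
        rw [this, h, map_zero])).map C
    · right
      have hj : j = 0 := by omega
      subst hj
      have := eq_C_of_isHomogeneous_zero hy
      rw [this]
      exact (isUnit_iff_ne_zero.mpr (by
        intro h
        apply right_ne_zero_of_mul hne
        rw [this, h, map_zero])).map C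

/-- A homogeneous degree-2 divisor `U` of `ℓ^4` is a constant multiple of `ℓ^2`. -/
lemma divisor_eq {n : ℕ} {ℓ U : MvPolynomial (Fin n) ℂ}
    (hℓ : ℓ.IsHomogeneous 1) (h0 : ℓ ≠ 0)
    (hU : U.IsHomogeneous 2) (hU0 : U ≠ 0) (hdvd : U ∣ ℓ ^ 4) :
    ∃ e : ℂ, U = C e * ℓ ^ 2 := by
  obtain ⟨i, hi4, hassoc⟩ := (dvd_prime_pow (prime_of_linear hℓ h0) 4).mp hdvd
  obtain ⟨u, hu⟩ := hassoc.symm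
  -- hu : ℓ ^ i * ↑u = U
  have hli : (ℓ ^ i).IsHomogeneous i := by simpa using hℓ.pow i
  have hne : ℓ ^ i * (u : MvPolynomial (Fin n) ℂ) ≠ 0 := by rw [hu]; exact hU0
  obtain ⟨k, hk, hwk⟩ := homog_cofactor hli hne (by rw [hu]; exact hU)
  have hv : (u : MvPolynomial (Fin n) ℂ) * ((u⁻¹ : _) : MvPolynomial (Fin n) ℂ) = 1 :=
    u.mul_inv
  obtain ⟨k', hkk', -⟩ := homog_cofactor hwk
    (by rw [hv]; exact one_ne_zero) (by rw [hv]; exact isHomogeneous_one _ _)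
  have hk0 : k = 0 := by omega
  have hi2 : i = 2 := by omega
  subst hk0 hi2
  refine ⟨coeff 0 (u : MvPolynomial (Fin n) ℂ), ?_⟩
  rw [← hu, ← eq_C_of_isHomogeneous_zero hwk, mul_comm]

end QuadAux

/-- If a Gaussian and a Laplace fifth moment form with the same nonzero linear part agree,
i.e. `ℓ^5 + 10 q ℓ^3 + 15 q² ℓ = ℓ^5 + 10 q ' ℓ^3 + 30 q'² ℓ` with `ℓ` a nonzero linear
form and `q, q'` quadratic forms, then both `q` and `q'` are scalar multiples of `ℓ²`. -/
theorem quadratics_are_multiples_of_square (n : ℕ)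
    (ℓ q q' : MvPolynomial (Fin n) ℂ)
    (hℓ : ℓ ∈ homogeneousSubmodule (Fin n) ℂ 1) (hℓ0 : ℓ ≠ 0)
    (hq : q ∈ homogeneousSubmodule (Fin n) ℂ 2)
    (hq' : q' ∈ homogeneousSubmodule (Fin n) ℂ 2)
    (heq : ℓ ^ 5 + 10 * q * ℓ ^ 3 + 15 * q ^ 2 * ℓ
         = ℓ ^ 5 + 10 * q' * ℓ ^ 3 + 30 * q' ^ 2 * ℓ) :
    (∃ c : ℂ, q = c • ℓ ^ 2) ∧ (∃ c' : ℂ, q' = c' • ℓ ^ 2) := by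
  classical
  have hℓ1 : ℓ.IsHomogeneous 1 := (mem_homogeneousSubmodule _ _).mp hℓ
  have hq2 : q.IsHomogeneous 2 := (mem_homogeneousSubmodule _ _).mp hq
  have hq'2 : q'.IsHomogeneous 2 := (mem_homogeneousSubmodule _ _).mp hq'
  have h5 : (5 : MvPolynomial (Fin n) ℂ) ≠ 0 := by
    have : ((C (5:ℂ)) : MvPolynomial (Fin n) ℂ) ≠ 0 := by
      rw [Ne, C_eq_zero]; norm_num
    simpa using this
  have hc5 : (5 : MvPolynomial (Fin n) ℂ) * ℓ ≠ 0 := mul_ne_zero h5 hℓ0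
  have h0 : 3*q^2 + 2*q*ℓ^2 = 6*q'^2 + 2*q'*ℓ^2 := by
    apply mul_left_cancel₀ hc5
    linear_combination heq
  set s : ℂ := ((Real.sqrt 2 : ℝ) : ℂ) with hs_def
  have hs2 : s^2 = 2 := by
    rw [hs_def]; norm_cast; exact Real.sq_sqrt (by norm_num)
  have hs0 : s ≠ 0 := by
    intro h; rw [h] at hs2; norm_num at hs2
  have hC2 : (C (2:ℂ) : MvPolynomial (Fin n) ℂ) = 2 := map_ofNat _ 2
  have hC6 : (C (6:ℂ) : MvPolynomial (Fin n) ℂ) = 6 := map_ofNat _ 6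
  have hC12 : (C (12:ℂ) : MvPolynomial (Fin n) ℂ) = 12 := map_ofNat _ 12
  have hsC : (C s : MvPolynomial (Fin n) ℂ)^2 = 2 := by
    rw [← map_pow, hs2, hC2]
  have hUV : (C s * (3*q + ℓ^2) - (6*q' + ℓ^2)) * (C s * (3*q + ℓ^2) + (6*q' + ℓ^2))
      = ℓ^4 := by
    linear_combination (6 : MvPolynomial (Fin n) ℂ) * h0 + (3*q+ℓ^2)^2 * hsC
  have hℓ2 : (ℓ^2).IsHomogeneous 2 := by simpa using hℓ1.pow 2
  have hA : ((3:MvPolynomial (Fin n) ℂ)*q + ℓ^2).IsHomogeneous 2 := by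
    have := (hq2.C_mul (3:ℂ)).add hℓ2
    rwa [show (C (3:ℂ) : MvPolynomial (Fin n) ℂ) = 3 from map_ofNat _ 3] at this
  have hB : ((6:MvPolynomial (Fin n) ℂ)*q' + ℓ^2).IsHomogeneous 2 := by
    have := (hq'2.C_mul (6:ℂ)).add hℓ2
    rwa [show (C (6:ℂ) : MvPolynomial (Fin n) ℂ) = 6 from map_ofNat _ 6] at this
  have hU : (C s * (3*q + ℓ^2) - (6*q' + ℓ^2)).IsHomogeneous 2 := (hA.C_mul s).sub hB
  have hV : (C s * (3*q + ℓ^2) + (6*q' + ℓ^2)).IsHomogeneous 2 := (hA.C_mul s).add hB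
  have hUVne : (C s * (3*q + ℓ^2) - (6*q' + ℓ^2)) * (C s * (3*q + ℓ^2) + (6*q' + ℓ^2)) ≠ 0 := by
    rw [hUV]; exact pow_ne_zero _ hℓ0
  have hU0 := left_ne_zero_of_mul hUVne
  have hV0 := right_ne_zero_of_mul hUVne
  obtain ⟨e, he⟩ := QuadAux.divisor_eq hℓ1 hℓ0 hU hU0 ⟨_, hUV.symm⟩
  obtain ⟨f, hf⟩ := QuadAux.divisor_eq hℓ1 hℓ0 hV hV0 ⟨C s * (3*q + ℓ^2) - (6*q' + ℓ^2), by rw [← hUV]; ring⟩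
  have key1 : (6:MvPolynomial (Fin n) ℂ) * C s * q = (C e + C f - 2 * C s) * ℓ^2 := by
    linear_combination he + hf
  have key2 : (12:MvPolynomial (Fin n) ℂ) * q' = (C f - C e - 2) * ℓ^2 := by
    linear_combination hf - he
  constructor
  · refine ⟨(e + f - 2*s)/(6*s), ?_⟩
    rw [smul_eq_C_mul]
    have h6s : (6:MvPolynomial (Fin n) ℂ) * C s ≠ 0 := by
      apply mul_ne_zero
      · have : ((C (6:ℂ)) : MvPolynomial (Fin n) ℂ) ≠ 0 := by
          rw [Ne, C_eq_zero]; norm_num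
        simpa using this
      · rw [Ne, C_eq_zero]; exact hs0
    apply mul_left_cancel₀ h6s
    rw [key1]
    have hconst : (6:MvPolynomial (Fin n) ℂ) * C s * C ((e + f - 2*s)/(6*s))
        = C e + C f - 2 * C s := by
      rw [← hC6, ← C_mul, ← C_mul,
        show (6:ℂ) * s * ((e + f - 2*s)/(6*s)) = e + f - 2*s by field_simp,
        map_sub, map_add, C_mul, hC2]
    rw [← mul_assoc, hconst]
  · refine ⟨(f - e - 2)/12, ?_⟩
    rw [smul_eq_C_mul]
    have h12 : (12:MvPolynomial (Fin n) ℂ) ≠ 0 := by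
      have : ((C (12:ℂ)) : MvPolynomial (Fin n) ℂ) ≠ 0 := by
        rw [Ne, C_eq_zero]; norm_num
      simpa using this
    apply mul_left_cancel₀ h12
    rw [key2]
    have hconst : (12:MvPolynomial (Fin n) ℂ) * C ((f - e - 2)/12) = C f - C e - 2 := by
      rw [← hC12, ← C_mul,
        show (12:ℂ) * ((f - e - 2)/12) = f - e - 2 by field_simp,
        map_sub, map_sub, hC2]
    rw [← mul_assoc, hconst]
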